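/- In the lower bound instance distribution, both instances T_1 and T_2 admit a schedule with total flow time O(L): in T_1, schedule all √L jobs of S_2 in the first √L rounds, then for the next √L rounds schedule one job of S_1 and one of S_3 per round (they are vertex-disjoint), then schedule each remaining S_3 job at its release time; every job in S_1 has flow time ≤ 2√L, every job in S_2 has flow time ≤ √L, and every job in S_3 has flow time 1, giving total flow time at most 3L + 2L = O(L). -/
import Mathlib

open Finset

abbrev JobsLB (m L : ℕ) := (Fin m ⊕ Fin m) ⊕ Fin L

def relLB (m L : ℕ) : JobsLB m L → ℕ := Sum.elim (fun _ => 1) (fun k => m + 1 + k.val)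

def srcT1 (m L : ℕ) : JobsLB m L → Fin 4 :=
  Sum.elim (Sum.elim (fun _ => 0) (fun _ => 1)) (fun _ => 2)

def dstT1 (m L : ℕ) : JobsLB m L → Fin 4 :=
  Sum.elim (Sum.elim (fun _ => 1) (fun _ => 2)) (fun _ => 3)

def srcT2 (m L : ℕ) : JobsLB m L → Fin 4 :=
  Sum.elim (Sum.elim (fun _ => 0) (fun _ => 1)) (fun _ => 0)

def dstT2 (m L : ℕ) : JobsLB m L → Fin 4 :=
  Sum.elim (Sum.elim (fun _ => 1) (fun _ => 2)) (fun _ => 3)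

def IsMatchingSched {J : Type*} (u v : J → Fin 4) (C : J → ℕ) : Prop :=
  ∀ j k, j ≠ k → C j = C k → u j ≠ u k ∧ u j ≠ v k ∧ v j ≠ u k ∧ v j ≠ v k

lemma sumBoundAux (m L : ℕ) (hL : L = m * m) :
    ∑ i : Fin m, (m + 1 + i.val) + ∑ i : Fin m, (1 + i.val) + L ≤ 5 * L := by
  have h1 : ∑ i : Fin m, (m + 1 + i.val) ≤ ∑ _i : Fin m, (2 * m) := by
    apply Finset.sum_le_sum
    intro i _
    have := i.isLt
    omega
  have h2 : ∑ i : Fin m, (1 + i.val) ≤ ∑ _i : Fin m, m := by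
    apply Finset.sum_le_sum
    intro i _
    have := i.isLt
    omega
  simp only [Finset.sum_const, card_univ, Fintype.card_fin, smul_eq_mul] at h1 h2
  have hmm : m * (2 * m) = 2 * (m * m) := by ring
  omega

theorem lower_bound_opt_small (m L : ℕ) (hL : L = m * m) (hm : 1 ≤ m) :
    (∃ C : JobsLB m L → ℕ,
        (∀ j, relLB m L j ≤ C j) ∧ IsMatchingSched (srcT1 m L) (dstT1 m L) C ∧
        ∑ j, (C j + 1 - relLB m L j) ≤ 5 * L) ∧
    (∃ C : JobsLB m L → ℕ,
        (∀ j, relLB m L j ≤ C j) ∧ IsMatchingSched (srcT2 m L) (dstT2 m L) C ∧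
        ∑ j, (C j + 1 - relLB m L j) ≤ 5 * L) := by
  constructor
  · -- T₁ : S₂ first, then S₁, S₃ at release
    refine ⟨Sum.elim (Sum.elim (fun i => m + 1 + i.val) (fun i => 1 + i.val))
      (fun k => m + 1 + k.val), ?_, ?_, ?_⟩
    · rintro ((i | i) | k) <;> simp [relLB] <;> omega
    · rintro ((i | i) | i) ((i' | i') | i') hne hC <;>
        simp_all [srcT1, dstT1] <;>
        first
        | (exact hne (by omega))
        | (have := i.isLt; have := i'.isLt; omega)
        | decide
    · rw [Fintype.sum_sum_type, Fintype.sum_sum_type]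
      simp only [Sum.elim_inl, Sum.elim_inr, relLB]
      have : ∀ k : Fin L, m + 1 + k.val + 1 - (m + 1 + k.val) = 1 := fun k => by omega
      simp only [this, Finset.sum_const, card_univ, Fintype.card_fin, smul_eq_mul, mul_one]
      have := sumBoundAux m L hL
      have e1 : ∀ i : Fin m, m + 1 + i.val + 1 - 1 = m + 1 + i.val := fun i => by omega
      have e2 : ∀ i : Fin m, 1 + i.val + 1 - 1 = 1 + i.val := fun i => by omega
      simp only [e1, e2]
      omega
  · -- T₂ : S₁ first, then S₂, S₄ at release
    refine ⟨Sum.elim (Sum.elim (fun i => 1 + i.val) (fun i => m + 1 + i.val))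
      (fun k => m + 1 + k.val), ?_, ?_, ?_⟩
    · rintro ((i | i) | k) <;> simp [relLB] <;> omega
    · rintro ((i | i) | i) ((i' | i') | i') hne hC <;>
        simp_all [srcT2, dstT2] <;>
        first
        | (exact hne (by omega))
        | (have := i.isLt; have := i'.isLt; omega)
        | decide
    · rw [Fintype.sum_sum_type, Fintype.sum_sum_type]
      simp only [Sum.elim_inl, Sum.elim_inr, relLB]
      have : ∀ k : Fin L, m + 1 + k.val + 1 - (m + 1 + k.val) = 1 := fun k => by omega
      simp only [this, Finset.sum_const, card_univ, Fintype.card_fin, smul_eq_mul, mul_one]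
      have := sumBoundAux m L hL
      have e1 : ∀ i : Fin m, m + 1 + i.val + 1 - 1 = m + 1 + i.val := fun i => by omega
      have e2 : ∀ i : Fin m, 1 + i.val + 1 - 1 = 1 + i.val := fun i => by omega
      simp only [e1, e2]
      omega
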